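/- Let L be slowly varying, differentiable, with ultimately monotone derivative L', and suppose L is extended regularly varying with index ρ < 0 and auxiliary function B, i.e. (L(ts) - L(t))/B(t) → (s^ρ - 1)/ρ as t → ∞ for all s > 0. Then L(∞) = lim_{t→∞} L(t) exists and is finite, f(t) := L(∞) - L(t) is regularly varying of index ρ with f(t)/B(t) → -1/ρ, and B(t) ~ tL'(t) as t → ∞. -/

import Mathlib

open Filter Topology Set

private lemma div_div_same9 (a c b : ℝ) (hb : b ≠ 0) : (a/b)/(c/b) = a/c := by
  rcases eq_or_ne c 0 with rfl | hc
  · simp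
  · field_simp

set_option maxHeartbeats 2000000 in
/-- If `L` is slowly varying, differentiable with ultimately monotone derivative, and
extended regularly varying with index `ρ < 0` and auxiliary function `B`, then
`L(∞) = lim L(t)` exists (finite), `f(t) = L(∞) - L(t)` is regularly varying of index `ρ`
with `f(t)/B(t) → -1/ρ`, and `B(t) ~ tL'(t)`. -/
theorem stmt9 (L B : ℝ → ℝ) (ρ : ℝ) (hρ : ρ < 0)
    (hL : ∀ x > (0:ℝ), Tendsto (fun t => L (t * x) / L t) atTop (𝓝 1))
    (hdiff : Differentiable ℝ L)
    (hmono : ∃ T : ℝ, MonotoneOn (deriv L) (Ici T) ∨ AntitoneOn (deriv L) (Ici T))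
    (hERV : ∀ s > (0:ℝ), Tendsto (fun t => (L (t * s) - L t) / B t) atTop
      (𝓝 ((s ^ ρ - 1) / ρ))) :
    ∃ Linf : ℝ, Tendsto L atTop (𝓝 Linf) ∧
      (∀ x > (0:ℝ), Tendsto (fun t => (Linf - L (t * x)) / (Linf - L t)) atTop (𝓝 (x ^ ρ))) ∧
      Tendsto (fun t => (Linf - L t) / B t) atTop (𝓝 (-1/ρ)) ∧
      Tendsto (fun t => B t / (t * deriv L t)) atTop (𝓝 1) := by
  have hρ' : ρ ≠ 0 := ne_of_lt hρ
  set c : ℝ → ℝ := fun t => L (t*2) - L t with hc_def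
  have h2ρ : (0:ℝ) < 2 ^ ρ := Real.rpow_pos_of_pos two_pos ρ
  have h2ρ1 : (2:ℝ) ^ ρ < 1 := Real.rpow_lt_one_of_one_lt_of_neg one_lt_two hρ
  set A : ℝ := ((2:ℝ)^ρ - 1)/ρ with hA_def
  have hApos : 0 < A := div_pos_of_neg_of_neg (by linarith) hρ
  have ha : Tendsto (fun t => c t / B t) atTop (𝓝 A) := hERV 2 two_pos
  -- the doubled difference compared to B
  have hc2B : Tendsto (fun t => c (t*2) / B t) atTop (𝓝 ((2:ℝ)^ρ * A)) := by
    have h4 := hERV 4 (by norm_num)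
    have h2 := hERV 2 (by norm_num)
    have heq : (fun t => c (t*2) / B t)
        = fun t => (L (t*4) - L t)/B t - (L (t*2) - L t)/B t := by
      funext t
      have h24 : t*2*2 = t*4 := by ring
      rw [hc_def]; simp only [h24]; rw [div_sub_div_same]; ring_nf
    rw [heq]
    have hval : (2:ℝ)^ρ * A = ((4:ℝ)^ρ - 1)/ρ - ((2:ℝ)^ρ - 1)/ρ := by
      have h4ρ : (4:ℝ)^ρ = (2:ℝ)^ρ * (2:ℝ)^ρ := by
        rw [show (4:ℝ) = 2*2 by norm_num, Real.mul_rpow (by norm_num) (by norm_num)]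
      rw [hA_def, h4ρ]; field_simp; ring
    rw [hval]
    exact h4.sub h2
  -- eventually B and c are nonzero
  have hBcne : ∀ᶠ t in atTop, B t ≠ 0 ∧ c t ≠ 0 := by
    filter_upwards [ha.eventually (eventually_gt_nhds (show A/2 < A by linarith))] with t ht
    have hne : c t / B t ≠ 0 := ne_of_gt (by linarith)
    constructor
    · intro h; rw [h, div_zero] at hne; exact hne rfl
    · intro h; rw [h, zero_div] at hne; exact hne rfl
  have hBne : ∀ᶠ t in atTop, B t ≠ 0 := hBcne.mono fun t h => h.1
  -- ratio of consecutive c's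
  have hc2 : Tendsto (fun t => c (t*2) / c t) atTop (𝓝 ((2:ℝ)^ρ)) := by
    have hdiv := hc2B.div ha (ne_of_gt hApos)
    rw [mul_div_assoc, div_self (ne_of_gt hApos), mul_one] at hdiv
    refine hdiv.congr' ?_
    filter_upwards [hBcne] with t ht
    exact div_div_same9 _ _ _ ht.1
  set r : ℝ := ((2:ℝ)^ρ + 1)/2 with hr_def
  have hr0 : 0 < r := by positivity
  have hr1 : r < 1 := by rw [hr_def]; linarith
  have h2r : (2:ℝ)^ρ < r := by rw [hr_def]; linarith
  -- a threshold beyond which we have contraction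
  obtain ⟨T₁, hT₁ge, hT₁⟩ : ∃ T₁ : ℝ, 1 ≤ T₁ ∧ ∀ t ≥ T₁,
      |c (t*2)| ≤ r * |c t| ∧ B t ≠ 0 ∧ c t ≠ 0 := by
    have h1 : ∀ᶠ t in atTop, |c (t*2)| ≤ r * |c t| ∧ B t ≠ 0 ∧ c t ≠ 0 := by
      filter_upwards [hc2.eventually (eventually_lt_nhds h2r),
        hc2.eventually (eventually_gt_nhds h2ρ), hBcne] with t hlt hgt hcne
      refine ⟨?_, hcne.1, hcne.2⟩
      have habs : |c (t*2)| / |c t| ≤ r := by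
        rw [← abs_div, abs_of_pos hgt]; exact hlt.le
      have hcpos : 0 < |c t| := abs_pos.2 hcne.2
      calc |c (t*2)| = |c (t*2)| / |c t| * |c t| := by field_simp
        _ ≤ r * |c t| := by gcongr
    obtain ⟨T, hT⟩ := eventually_atTop.1 h1
    exact ⟨max T 1, le_max_right _ _, fun t ht => hT t (le_trans (le_max_left _ _) ht)⟩
  have hcn : ∀ t ≥ T₁, ∀ n : ℕ, |c (t * 2^n)| ≤ r^n * |c t| := by
    intro t ht n
    induction n with
    | zero => simp
    | succ n ih =>
      have hsucc : t * 2^(n+1) = (t * 2^n) * 2 := by rw [pow_succ]; ring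
      have harg : t * 2^n ≥ T₁ := by
        calc T₁ ≤ t := ht
          _ = t * 1 := (mul_one t).symm
          _ ≤ t * 2^n := by
            apply mul_le_mul_of_nonneg_left (one_le_pow₀ one_le_two) (by linarith)
      calc |c (t * 2^(n+1))| = |c ((t * 2^n) * 2)| := by rw [hsucc]
        _ ≤ r * |c (t * 2^n)| := (hT₁ _ harg).1
        _ ≤ r * (r^n * |c t|) := by gcongr
        _ = r^(n+1) * |c t| := by ring
  have htele : ∀ t ≥ T₁, ∀ n : ℕ, |L (t * 2^n) - L t| ≤ (1-r)⁻¹ * |c t| := by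
    intro t ht n
    have h1r : (0:ℝ) < 1 - r := by linarith
    have key : |L (t * 2^n) - L t| ≤ ((1 - r^n)/(1-r)) * |c t| := by
      induction n with
      | zero => simp
      | succ n ih =>
        have hsucc : t * 2^(n+1) = (t * 2^n) * 2 := by rw [pow_succ]; ring
        have h1 : |L (t * 2^(n+1)) - L t| ≤ |c (t * 2^n)| + |L (t * 2^n) - L t| := by
          have heq : L (t * 2^(n+1)) - L t = c (t * 2^n) + (L (t * 2^n) - L t) := by
            rw [hc_def, hsucc]; ring
          rw [heq]; exact abs_add_le _ _
        have h2 := hcn t ht n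
        have h3 : r^n * |c t| + (1 - r^n)/(1-r) * |c t| = (1 - r^(n+1))/(1-r) * |c t| := by
          field_simp
          ring
        linarith
    have hrn : (0:ℝ) ≤ r^n := by positivity
    calc |L (t * 2^n) - L t| ≤ (1 - r^n)/(1-r) * |c t| := key
      _ ≤ 1/(1-r) * |c t| := by gcongr; linarith
      _ = (1-r)⁻¹ * |c t| := by rw [one_div]
  -- mean value theorem helper
  have hMVT : ∀ t > (0:ℝ), ∀ s, 1 < s → ∃ ξ ∈ Ioo t (t*s),
      (s - 1)*t*(deriv L ξ) = L (t*s) - L t := by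
    intro t ht s hs
    have hlt : t < t * s := lt_mul_of_one_lt_right ht hs
    obtain ⟨ξ, hξ, hslope⟩ := exists_hasDerivAt_eq_slope L (deriv L) hlt
      hdiff.continuous.continuousOn (fun x _ => (hdiff x).hasDerivAt)
    refine ⟨ξ, hξ, ?_⟩
    rw [hslope]
    have hne : t * s - t ≠ 0 := by nlinarith
    rw [show (s - 1) * t = t * s - t by ring]
    exact mul_div_cancel₀ _ hne
  obtain ⟨T0, hmc⟩ := hmono
  set T₂ : ℝ := max T0 T₁ with hT₂_def
  have hT₂1 : (1:ℝ) ≤ T₂ := le_trans hT₁ge (le_max_right _ _)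
  have hT₂T₁ : T₁ ≤ T₂ := le_max_right _ _
  -- sign of derivative and monotonicity of L, with pairing
  have hLcase : (MonotoneOn (deriv L) (Ici T0) ∧ AntitoneOn L (Ici T₂)) ∨
      (AntitoneOn (deriv L) (Ici T0) ∧ MonotoneOn L (Ici T₂)) := by
    rcases hmc with hm | hm
    · left
      refine ⟨hm, ?_⟩
      have hle : ∀ t ≥ T₂, deriv L t ≤ 0 := by
        intro t ht
        by_contra hpos
        push_neg at hpos
        have htT0 : T0 ≤ t := le_trans (le_max_left _ _) ht
        have htT1 : T₁ ≤ t := le_trans (le_max_right _ _) ht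
        have ht0 : 0 < t := lt_of_lt_of_le (by linarith) htT1
        obtain ⟨ξ, hξmem, hξ⟩ := hMVT t ht0 2 one_lt_two
        obtain ⟨ξ', hξ'mem, hξ'⟩ := hMVT (t*2) (by linarith) 2 one_lt_two
        have hξT0 : T0 ≤ ξ := le_trans htT0 hξmem.1.le
        have hξ'T0 : T0 ≤ ξ' := by have := hξ'mem.1; linarith
        have hLξ : deriv L t ≤ deriv L ξ := hm (mem_Ici.2 htT0) (mem_Ici.2 hξT0) hξmem.1.le
        have hLξ' : deriv L ξ ≤ deriv L ξ' := by
          apply hm (mem_Ici.2 hξT0) (mem_Ici.2 hξ'T0)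
          have h1 := hξmem.2; have h2 := hξ'mem.1; linarith
        have hct : c t = t * deriv L ξ := by simp only [hc_def]; linarith [hξ]
        have hct2 : c (t*2) = (t*2) * deriv L ξ' := by simp only [hc_def]; linarith [hξ']
        have hdpos : 0 < deriv L ξ := lt_of_lt_of_le hpos hLξ
        have hcpos : 0 < c t := by rw [hct]; positivity
        have hge : 2 * c t ≤ c (t*2) := by rw [hct, hct2]; nlinarith
        have hcon := (hT₁ t htT1).1
        rw [abs_of_pos hcpos, abs_of_pos (by linarith : 0 < c (t*2))] at hcon
        nlinarith
      apply antitoneOn_of_deriv_nonpos (convex_Ici _) hdiff.continuous.continuousOn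
        hdiff.differentiableOn
      intro x hx
      rw [interior_Ici] at hx
      exact hle x (le_of_lt hx)
    · right
      refine ⟨hm, ?_⟩
      have hle : ∀ t ≥ T₂, 0 ≤ deriv L t := by
        intro t ht
        by_contra hneg
        push_neg at hneg
        have htT0 : T0 ≤ t := le_trans (le_max_left _ _) ht
        have htT1 : T₁ ≤ t := le_trans (le_max_right _ _) ht
        have ht0 : 0 < t := lt_of_lt_of_le (by linarith) htT1
        obtain ⟨ξ, hξmem, hξ⟩ := hMVT t ht0 2 one_lt_two
        obtain ⟨ξ', hξ'mem, hξ'⟩ := hMVT (t*2) (by linarith) 2 one_lt_two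
        have hξT0 : T0 ≤ ξ := le_trans htT0 hξmem.1.le
        have hξ'T0 : T0 ≤ ξ' := by have := hξ'mem.1; linarith
        have hLξ : deriv L ξ ≤ deriv L t := hm (mem_Ici.2 htT0) (mem_Ici.2 hξT0) hξmem.1.le
        have hLξ' : deriv L ξ' ≤ deriv L ξ := by
          apply hm (mem_Ici.2 hξT0) (mem_Ici.2 hξ'T0)
          have h1 := hξmem.2; have h2 := hξ'mem.1; linarith
        have hct : c t = t * deriv L ξ := by simp only [hc_def]; linarith [hξ]
        have hct2 : c (t*2) = (t*2) * deriv L ξ' := by simp only [hc_def]; linarith [hξ']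
        have hdneg : deriv L ξ < 0 := lt_of_le_of_lt hLξ hneg
        have hcneg : c t < 0 := by rw [hct]; exact mul_neg_of_pos_of_neg ht0 hdneg
        have hge : c (t*2) ≤ 2 * c t := by rw [hct, hct2]; nlinarith
        have hcon := (hT₁ t htT1).1
        rw [abs_of_neg hcneg, abs_of_neg (by linarith : c (t*2) < 0)] at hcon
        nlinarith
      apply monotoneOn_of_deriv_nonneg (convex_Ici _) hdiff.continuous.continuousOn
        hdiff.differentiableOn
      intro x hx
      rw [interior_Ici] at hx
      exact hle x (le_of_lt hx)
  -- existence of the limit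
  obtain ⟨Linf, hLinf⟩ : ∃ Linf : ℝ, Tendsto L atTop (𝓝 Linf) := by
    have hpow : Tendsto (fun n : ℕ => T₂ * 2^n) atTop atTop :=
      Tendsto.const_mul_atTop (by linarith) (tendsto_pow_atTop_atTop_of_one_lt one_lt_two)
    have hT₂le : ∀ n : ℕ, T₂ ≤ T₂ * 2^n := by
      intro n
      calc T₂ = T₂ * 1 := (mul_one _).symm
        _ ≤ T₂ * 2^n := by
          apply mul_le_mul_of_nonneg_left (one_le_pow₀ one_le_two) (by linarith)
    rcases hLcase with ⟨_, hanti⟩ | ⟨_, hmon⟩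
    · set g : ℝ → ℝ := fun t => L (max t T₂) with hg_def
      have hg : Antitone g := fun s t hst =>
        hanti (mem_Ici.2 (le_max_right _ _)) (mem_Ici.2 (le_max_right _ _))
          (max_le_max hst le_rfl)
      have hmax : ∀ n : ℕ, g (T₂ * 2^n) = L (T₂ * 2^n) := by
        intro n; rw [hg_def]; simp [max_eq_left (hT₂le n)]
      rcases tendsto_of_antitone hg with hbot | ⟨l, hl⟩
      · exfalso
        have hcomp : Tendsto (fun n : ℕ => L (T₂ * 2^n)) atTop atBot :=
          (hbot.comp hpow).congr fun n => hmax n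
        have hbd : ∀ n : ℕ, L T₂ - (1-r)⁻¹ * |c T₂| ≤ L (T₂ * 2^n) := by
          intro n
          have := abs_le.1 (htele T₂ hT₂T₁ n)
          linarith [this.1]
        obtain ⟨n, hn⟩ := (tendsto_atBot.1 hcomp (L T₂ - (1-r)⁻¹ * |c T₂| - 1)).exists
        linarith [hbd n]
      · refine ⟨l, hl.congr' ?_⟩
        filter_upwards [eventually_ge_atTop T₂] with t ht
        rw [hg_def]; simp [max_eq_left ht]
    · set g : ℝ → ℝ := fun t => L (max t T₂) with hg_def
      have hg : Monotone g := fun s t hst =>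
        hmon (mem_Ici.2 (le_max_right _ _)) (mem_Ici.2 (le_max_right _ _))
          (max_le_max hst le_rfl)
      have hmax : ∀ n : ℕ, g (T₂ * 2^n) = L (T₂ * 2^n) := by
        intro n; rw [hg_def]; simp [max_eq_left (hT₂le n)]
      rcases tendsto_of_monotone hg with htop | ⟨l, hl⟩
      · exfalso
        have hcomp : Tendsto (fun n : ℕ => L (T₂ * 2^n)) atTop atTop :=
          (htop.comp hpow).congr fun n => hmax n
        have hbd : ∀ n : ℕ, L (T₂ * 2^n) ≤ L T₂ + (1-r)⁻¹ * |c T₂| := by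
          intro n
          have := abs_le.1 (htele T₂ hT₂T₁ n)
          linarith [this.2]
        obtain ⟨n, hn⟩ := (tendsto_atTop.1 hcomp (L T₂ + (1-r)⁻¹ * |c T₂| + 1)).exists
        linarith [hbd n]
      · refine ⟨l, hl.congr' ?_⟩
        filter_upwards [eventually_ge_atTop T₂] with t ht
        rw [hg_def]; simp [max_eq_left ht]
  set f : ℝ → ℝ := fun t => Linf - L t with hf_def
  have hfb : ∀ t ≥ T₁, |f t| ≤ (1-r)⁻¹ * |c t| := by
    intro t ht
    have ht0 : 0 < t := by linarith
    have hpow : Tendsto (fun n : ℕ => t * 2^n) atTop atTop :=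
      Tendsto.const_mul_atTop ht0 (tendsto_pow_atTop_atTop_of_one_lt one_lt_two)
    have hcomp : Tendsto (fun n : ℕ => |L (t * 2^n) - L t|) atTop (𝓝 |Linf - L t|) :=
      ((hLinf.comp hpow).sub_const (L t)).abs
    exact le_of_tendsto hcomp (Eventually.of_forall (htele t ht))
  have hfB : Tendsto (fun t => f t / B t) atTop (𝓝 (-1/ρ)) := by
    rw [Metric.tendsto_nhds]
    intro ε hε
    have hkeyN : ∀ N : ℕ, ((2:ℝ)^N : ℝ)^ρ = ((2:ℝ)^ρ)^N := by
      intro N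
      rw [← Real.rpow_natCast 2 N, ← Real.rpow_mul two_pos.le, mul_comm,
        Real.rpow_mul two_pos.le, Real.rpow_natCast]
    have s1 : Tendsto (fun N : ℕ => (((2:ℝ)^ρ)^N - 1)/ρ) atTop (𝓝 (-1/ρ)) := by
      have := ((tendsto_pow_atTop_nhds_zero_of_lt_one h2ρ.le h2ρ1).sub_const 1).div_const ρ
      convert this using 2
      norm_num
    have s2 : Tendsto (fun N : ℕ => (1-r)⁻¹ * ((A+1) * r^N)) atTop (𝓝 0) := by
      have := ((tendsto_pow_atTop_nhds_zero_of_lt_one hr0.le hr1).const_mul (A+1)).const_mul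
        (1-r)⁻¹
      simpa using this
    obtain ⟨N, hN1, hN2⟩ : ∃ N : ℕ, |(((2:ℝ)^ρ)^N - 1)/ρ - (-1/ρ)| < ε/3 ∧
        (1-r)⁻¹ * ((A+1) * r^N) < ε/3 := by
      obtain ⟨N1, h1⟩ := Metric.tendsto_atTop.1 s1 (ε/3) (by linarith)
      obtain ⟨N2, h2⟩ := Metric.tendsto_atTop.1 s2 (ε/3) (by linarith)
      refine ⟨max N1 N2, ?_, ?_⟩
      · have := h1 _ (le_max_left N1 N2); rwa [Real.dist_eq] at this
      · have := h2 _ (le_max_right N1 N2); rw [Real.dist_eq, sub_zero] at this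
        exact lt_of_le_of_lt (le_abs_self _) this
    have hsN : (0:ℝ) < 2^N := by positivity
    have hE := hERV ((2:ℝ)^N) hsN
    rw [hkeyN N] at hE
    have E1 := Metric.tendsto_nhds.1 hE (ε/3) (by linarith)
    have E2 : ∀ᶠ t in atTop, |c t / B t| < A + 1 := by
      filter_upwards [Metric.tendsto_nhds.1 ha 1 one_pos] with t hdist
      rw [Real.dist_eq] at hdist
      have h3 := abs_sub_abs_le_abs_sub (c t/B t) A
      rw [abs_of_pos hApos] at h3
      linarith
    filter_upwards [E1, E2, eventually_ge_atTop T₁] with t h1 h2 ht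
    rw [Real.dist_eq] at h1 ⊢
    have ht0 : (0:ℝ) < t := by linarith
    have harg : T₁ ≤ t * 2^N := by
      calc T₁ ≤ t := ht
        _ = t * 1 := (mul_one t).symm
        _ ≤ t * 2^N := by
          apply mul_le_mul_of_nonneg_left (one_le_pow₀ one_le_two) ht0.le
    have hsplit : f t/B t - (-1/ρ) = ((L (t*2^N) - L t)/B t - (((2:ℝ)^ρ)^N - 1)/ρ)
        + (f (t*2^N)/B t) + ((((2:ℝ)^ρ)^N - 1)/ρ - (-1/ρ)) := by
      have hft : f t = (L (t*2^N) - L t) + f (t*2^N) := by simp only [hf_def]; ring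
      rw [hft, add_div]; ring
    have b2 : |f (t*2^N)/B t| ≤ (1-r)⁻¹ * ((A+1) * r^N) := by
      rw [abs_div]
      calc |f (t*2^N)|/|B t| ≤ ((1-r)⁻¹ * (r^N * |c t|))/|B t| := by
            apply div_le_div_of_nonneg_right ?_ (abs_nonneg _)
            calc |f (t*2^N)| ≤ (1-r)⁻¹ * |c (t*2^N)| := hfb _ harg
              _ ≤ (1-r)⁻¹ * (r^N * |c t|) := by
                  have h1r : (0:ℝ) < 1 - r := by linarith
                  exact mul_le_mul_of_nonneg_left (hcn t ht N) (by positivity)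
        _ = (1-r)⁻¹ * r^N * (|c t|/|B t|) := by ring
        _ = (1-r)⁻¹ * r^N * |c t/B t| := by rw [abs_div]
        _ ≤ (1-r)⁻¹ * r^N * (A+1) := by
            have h1r : (0:ℝ) < 1 - r := by linarith
            apply mul_le_mul_of_nonneg_left h2.le (by positivity)
        _ = (1-r)⁻¹ * ((A+1) * r^N) := by ring
    calc |f t/B t - (-1/ρ)|
        ≤ |(L (t*2^N) - L t)/B t - (((2:ℝ)^ρ)^N - 1)/ρ| + |f (t*2^N)/B t|
          + |(((2:ℝ)^ρ)^N - 1)/ρ - (-1/ρ)| := by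
          rw [hsplit]; exact le_trans (abs_add_le _ _) (by gcongr; exact abs_add_le _ _)
      _ < ε := by linarith
  have hratio : ∀ x > (0:ℝ), Tendsto (fun t => f (t*x) / f t) atTop (𝓝 (x ^ ρ)) := by
    intro x hx
    have hnum : Tendsto (fun t => f (t*x) / B t) atTop (𝓝 (-(x^ρ)/ρ)) := by
      have h1 := hfB.sub (hERV x hx)
      have heq : (fun t => f t / B t - (L (t*x) - L t)/B t) = fun t => f (t*x) / B t := by
        funext t; rw [div_sub_div_same]; simp only [hf_def]; ring_nf
      rw [heq] at h1
      convert h1 using 2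
      field_simp
      ring
    have hne : -1/ρ ≠ 0 := div_ne_zero (by norm_num) hρ'
    have hdiv := hnum.div hfB hne
    have hval : -(x^ρ)/ρ / (-1/ρ) = x^ρ := by field_simp
    rw [hval] at hdiv
    refine hdiv.congr' ?_
    filter_upwards [hBne] with t hB
    exact div_div_same9 _ _ _ hB
  have hfne : ∀ᶠ t in atTop, f t ≠ 0 := by
    have hpos : (0:ℝ) < -1/ρ := div_pos_of_neg_of_neg (by norm_num) hρ
    filter_upwards [hfB.eventually (eventually_gt_nhds
      (show -1/ρ/2 < -1/ρ by linarith))] with t ht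
    intro h
    rw [h, zero_div] at ht
    linarith
  -- paired sign of f
  have hfsgn : (MonotoneOn (deriv L) (Ici T0) ∧ ∀ᶠ t in atTop, f t < 0) ∨
      (AntitoneOn (deriv L) (Ici T0) ∧ ∀ᶠ t in atTop, 0 < f t) := by
    rcases hLcase with ⟨hm, hanti⟩ | ⟨hm, hmon⟩
    · left
      refine ⟨hm, ?_⟩
      filter_upwards [hfne, eventually_ge_atTop T₂] with t hne ht
      have hle : Linf ≤ L t := by
        apply le_of_tendsto hLinf
        filter_upwards [eventually_ge_atTop t] with u hu
        exact hanti (mem_Ici.2 ht) (mem_Ici.2 (le_trans ht hu)) hu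
      have hle2 : f t ≤ 0 := by rw [hf_def]; simp; linarith
      cases lt_or_eq_of_le hle2 with
      | inl h => exact h
      | inr h => exact absurd h hne
    · right
      refine ⟨hm, ?_⟩
      filter_upwards [hfne, eventually_ge_atTop T₂] with t hne ht
      have hle : L t ≤ Linf := by
        apply ge_of_tendsto hLinf
        filter_upwards [eventually_ge_atTop t] with u hu
        exact hmon (mem_Ici.2 ht) (mem_Ici.2 (le_trans ht hu)) hu
      have hle2 : 0 ≤ f t := by rw [hf_def]; simp; linarith
      cases lt_or_eq_of_le hle2 with
      | inl h => exact h
      | inr h => exact absurd h.symm hne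
  -- the core: t L'(t) / f(t) → -ρ
  have hh : Tendsto (fun t => t * deriv L t / f t) atTop (𝓝 (-ρ)) := by
    rw [Metric.tendsto_nhds]
    intro ε hε
    have hslope : Tendsto (fun l : ℝ => (1 - l^ρ)/(l - 1)) (𝓝[>] (1:ℝ)) (𝓝 (-ρ)) := by
      have hd : HasDerivAt (fun x : ℝ => x ^ ρ) (ρ * (1:ℝ)^(ρ-1)) 1 :=
        Real.hasDerivAt_rpow_const (Or.inl one_ne_zero)
      rw [Real.one_rpow, mul_one] at hd
      have h2 : Tendsto (slope (fun x:ℝ => x^ρ) 1) (𝓝[>] 1) (𝓝 ρ) :=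
        (hasDerivAt_iff_tendsto_slope.1 hd).mono_left
          (nhdsWithin_mono 1 (fun x hx => ne_of_gt hx))
      have h3 := h2.neg
      refine h3.congr' ?_
      refine Eventually.of_forall (fun l => ?_)
      simp only [slope, vsub_eq_sub, smul_eq_mul, Real.one_rpow]
      rw [div_eq_inv_mul]; ring
    have hslope2 : Tendsto (fun l : ℝ => (1 - l^ρ)/(l - 1) * (l / l^ρ)) (𝓝[>] (1:ℝ))
        (𝓝 (-ρ)) := by
      have hc : ContinuousAt (fun l : ℝ => l / l^ρ) 1 :=
        continuousAt_id.div (Real.continuousAt_rpow_const 1 ρ (Or.inl one_ne_zero))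
          (by simp)
      have hc2 : Tendsto (fun l : ℝ => l / l^ρ) (𝓝[>] (1:ℝ)) (𝓝 1) := by
        have := hc.tendsto.mono_left (nhdsWithin_le_nhds (s := Ioi (1:ℝ)))
        simpa using this
      have := hslope.mul hc2
      simpa using this
    have hball : ∀ᶠ y in 𝓝 (-ρ), dist y (-ρ) < ε/2 := Metric.ball_mem_nhds _ (by linarith)
    obtain ⟨l, d1, d2, hl1⟩ :=
      ((hslope.eventually hball).and ((hslope2.eventually hball).and
        eventually_mem_nhdsWithin)).exists
    rw [mem_Ioi] at hl1
    rw [Real.dist_eq] at d1 d2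
    have hl0 : (0:ℝ) < l := by linarith
    have hl1' : (0:ℝ) < l - 1 := by linarith
    have hlρ : (0:ℝ) < l^ρ := Real.rpow_pos_of_pos hl0 ρ
    have hq := hratio l hl0
    have hD : Tendsto (fun t => 1 - f (t*l)/f t) atTop (𝓝 (1 - l^ρ)) :=
      tendsto_const_nhds.sub hq
    have hkey : ∀ᶠ t in atTop, (l-1)*t*deriv L (t*l)/f t ≤ 1 - f (t*l)/f t ∧
        1 - f (t*l)/f t ≤ (l-1)*t*deriv L t/f t := by
      rcases hfsgn with ⟨hm, hsgn⟩ | ⟨hm, hsgn⟩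
      · filter_upwards [hsgn, hfne, eventually_ge_atTop (max T0 1)] with t hft hfne' hge
        have ht0 : (0:ℝ) < t := lt_of_lt_of_le one_pos (le_trans (le_max_right _ _) hge)
        have htT0 : T0 ≤ t := le_trans (le_max_left _ _) hge
        obtain ⟨ξ, hmem, hslp⟩ := hMVT t ht0 l hl1
        have htl : t ≤ t * l := by nlinarith
        have h1 : deriv L t ≤ deriv L ξ :=
          hm (mem_Ici.2 htT0) (mem_Ici.2 (le_trans htT0 hmem.1.le)) hmem.1.le
        have h2 : deriv L ξ ≤ deriv L (t*l) :=
          hm (mem_Ici.2 (le_trans htT0 hmem.1.le)) (mem_Ici.2 (le_trans htT0 htl)) hmem.2.le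
        have e : f t - f (t*l) = (l-1)*t*deriv L ξ := by
          simp only [hf_def]; linarith [hslp]
        have i1 : (l-1)*t*deriv L t ≤ f t - f (t*l) := by rw [e]; nlinarith
        have i2 : f t - f (t*l) ≤ (l-1)*t*deriv L (t*l) := by rw [e]; nlinarith
        have q1 := div_le_div_of_nonpos_of_le hft.le i1
        have q2 := div_le_div_of_nonpos_of_le hft.le i2
        rw [sub_div, div_self hfne'] at q1 q2
        exact ⟨q2, q1⟩
      · filter_upwards [hsgn, hfne, eventually_ge_atTop (max T0 1)] with t hft hfne' hge
        have ht0 : (0:ℝ) < t := lt_of_lt_of_le one_pos (le_trans (le_max_right _ _) hge)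
        have htT0 : T0 ≤ t := le_trans (le_max_left _ _) hge
        obtain ⟨ξ, hmem, hslp⟩ := hMVT t ht0 l hl1
        have htl : t ≤ t * l := by nlinarith
        have h1 : deriv L ξ ≤ deriv L t :=
          hm (mem_Ici.2 htT0) (mem_Ici.2 (le_trans htT0 hmem.1.le)) hmem.1.le
        have h2 : deriv L (t*l) ≤ deriv L ξ :=
          hm (mem_Ici.2 (le_trans htT0 hmem.1.le)) (mem_Ici.2 (le_trans htT0 htl)) hmem.2.le
        have e : f t - f (t*l) = (l-1)*t*deriv L ξ := by
          simp only [hf_def]; linarith [hslp]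
        have i1 : (l-1)*t*deriv L (t*l) ≤ f t - f (t*l) := by rw [e]; nlinarith
        have i2 : f t - f (t*l) ≤ (l-1)*t*deriv L t := by rw [e]; nlinarith
        have q1 := div_le_div_of_nonneg_right i1 hft.le
        have q2 := div_le_div_of_nonneg_right i2 hft.le
        rw [sub_div, div_self hfne'] at q1 q2
        exact ⟨q1, q2⟩
    have hlow : ∀ᶠ t in atTop, -ρ - ε < t * deriv L t / f t := by
      have hDd : Tendsto (fun t => (1 - f (t*l)/f t)/(l-1)) atTop (𝓝 ((1 - l^ρ)/(l-1))) :=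
        hD.div_const _
      have hgt : -ρ - ε < (1-l^ρ)/(l-1) := by
        have := abs_lt.1 d1; linarith [this.1]
      filter_upwards [hDd.eventually (eventually_gt_nhds hgt), hkey] with t h1 h2
      have h3 : (1 - f (t*l)/f t)/(l-1) ≤ t * deriv L t / f t := by
        rw [div_le_iff₀ hl1']
        calc 1 - f (t*l)/f t ≤ (l-1)*t*deriv L t/f t := h2.2
          _ = t * deriv L t/f t * (l-1) := by ring
      linarith
    have hup : ∀ᶠ t in atTop, t * deriv L t / f t < -ρ + ε := by
      have hqpos : ∀ᶠ t in atTop, 0 < f (t*l)/f t :=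
        hq.eventually (eventually_gt_nhds (by positivity))
      have hden : Tendsto (fun t => (l-1)/l * (f (t*l)/f t)) atTop (𝓝 ((l-1)/l * l^ρ)) :=
        tendsto_const_nhds.mul hq
      have hdenne : (l-1)/l * l^ρ ≠ 0 := by positivity
      have hRHS : Tendsto (fun t => (1 - f (t*l)/f t) / ((l-1)/l * (f (t*l)/f t))) atTop
          (𝓝 ((1-l^ρ)/((l-1)/l * l^ρ))) := hD.div hden hdenne
      have hvale : (1-l^ρ)/((l-1)/l * l^ρ) = (1-l^ρ)/(l-1) * (l/l^ρ) := by
        field_simp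
      rw [hvale] at hRHS
      have hlt : (1-l^ρ)/(l-1) * (l/l^ρ) < -ρ + ε := by
        have := abs_lt.1 d2; linarith [this.2]
      have ev1 := hRHS.eventually (eventually_lt_nhds hlt)
      have ev3 : ∀ᶠ t in atTop, (t*l) * deriv L (t*l) / f (t*l) < -ρ + ε := by
        filter_upwards [ev1, hkey, hqpos, hfne] with t h1 h2 hqp hf1
        have hfl : f (t*l) ≠ 0 := by
          intro h; rw [h, zero_div] at hqp; exact lt_irrefl _ hqp
        have hcoef : 0 < (l-1)/l * (f (t*l)/f t) := mul_pos (div_pos hl1' hl0) hqp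
        have hle : (t*l) * deriv L (t*l) / f (t*l)
            ≤ (1 - f (t*l)/f t) / ((l-1)/l * (f (t*l)/f t)) := by
          rw [le_div_iff₀ hcoef]
          calc (t*l) * deriv L (t*l) / f (t*l) * ((l-1)/l * (f (t*l)/f t))
              = (l-1)*t*deriv L (t*l)/f t := by field_simp
            _ ≤ 1 - f (t*l)/f t := h2.1
        linarith
      obtain ⟨T, hT⟩ := eventually_atTop.1 ev3
      refine eventually_atTop.2 ⟨max T 1 * l, fun u hu => ?_⟩
      have h1 : max T 1 ≤ u / l := (le_div_iff₀ hl0).2 hu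
      have := hT (u/l) (le_trans (le_max_left _ _) h1)
      rwa [div_mul_cancel₀ u (ne_of_gt hl0)] at this
    filter_upwards [hlow, hup] with t h1 h2
    rw [Real.dist_eq, abs_lt]
    constructor <;> [linarith; linarith]
  have hfinal : Tendsto (fun t => B t / (t * deriv L t)) atTop (𝓝 1) := by
    have h1 := hfB.inv₀ (div_ne_zero (by norm_num) hρ')
    have h2 := hh.inv₀ (by intro h; apply hρ'; linarith)
    have h3 := h1.mul h2
    have hval : (-1/ρ)⁻¹ * (-ρ)⁻¹ = 1 := by field_simp
    rw [hval] at h3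
    refine h3.congr' ?_
    filter_upwards [hfne] with t hf
    rw [inv_div, inv_div, div_mul_div_comm, mul_comm (B t) (f t), mul_div_mul_left _ _ hf]
  exact ⟨Linf, hLinf, hratio, hfB, hfinal⟩
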